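/- Let B = ℂ[u]⋊Γ. Then the ℂ-linear span of the commutators {xy − yx : x, y ∈ B} equals the ℂ-linear span of the set {u^j ξ^i : j ≥ 1, 1 ≤ i ≤ d−1} ∪ {u^j : j ≥ 1, d ∤ j}. -/

import Mathlib

/-!
STATEMENT 5: Let `B = ℂ[u] ⋊ Γ` (the subalgebra of `A = ℂ[u^{±1}] ⋊ Γ` spanned by the
`u^j ξ^i` with `j ≥ 0`).  Then the ℂ-linear span of the commutators `{xy − yx : x y ∈ B}`
equals the ℂ-linear span of `{u^j ξ^i : j ≥ 1, 1 ≤ i ≤ d−1} ∪ {u^j : j ≥ 1, d ∤ j}`.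
-/

/-- Data exhibiting `A` as the skew group algebra `ℂ[u^{±1}] ⋊ (ℤ/dℤ)`,
where `b j i` represents the basis element `u^j ξ^i`. -/
structure SkewLaurentAlgebra (d : ℕ) (ζ : ℂ) (A : Type) [Ring A] [Algebra ℂ A] where
  b : ℤ → ZMod d → A
  basis : Module.Basis (ℤ × ZMod d) ℂ A
  basis_eq : ∀ (j : ℤ) (i : ZMod d), basis (j, i) = b j i
  b_one : b 0 0 = 1
  b_mul : ∀ (j₁ j₂ : ℤ) (i₁ i₂ : ZMod d),
    b j₁ i₁ * b j₂ i₂ = (ζ ^ ((i₁.val : ℤ) * j₂)) • b (j₁ + j₂) (i₁ + i₂)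

lemma zpow_eq_of_dvd_sub {d : ℕ} {ζ : ℂ} (hζ : IsPrimitiveRoot ζ d) (hd : 0 < d)
    {e1 e2 : ℤ} (h : (d : ℤ) ∣ e1 - e2) : ζ ^ e1 = ζ ^ e2 := by
  have hζ0 : ζ ≠ 0 := hζ.ne_zero hd.ne'
  obtain ⟨k, hk⟩ := h
  have he : e1 = e2 + d * k := by linarith
  rw [he, zpow_add₀ hζ0, zpow_mul, zpow_natCast, hζ.pow_eq_one, one_zpow, mul_one]

theorem stmt_5 (d : ℕ) (hd : 0 < d) (ζ : ℂ) (hζ : IsPrimitiveRoot ζ d)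
    (A : Type) [Ring A] [Algebra ℂ A] (S : SkewLaurentAlgebra d ζ A)
    (B : Submodule ℂ A)
    (hB : B = Submodule.span ℂ {x : A | ∃ (j : ℤ) (i : ZMod d), 0 ≤ j ∧ x = S.b j i}) :
    Submodule.span ℂ {x : A | ∃ y ∈ B, ∃ z ∈ B, x = y * z - z * y}
      = Submodule.span ℂ
          ({x : A | ∃ (j : ℤ) (i : ZMod d), 1 ≤ j ∧ i ≠ 0 ∧ x = S.b j i}
            ∪ {x : A | ∃ j : ℤ, 1 ≤ j ∧ ¬ ((d : ℤ) ∣ j) ∧ x = S.b j 0}) := by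
  haveI : NeZero d := ⟨hd.ne'⟩
  have hζ0 : ζ ≠ 0 := hζ.ne_zero hd.ne'
  set setB : Set A := {x : A | ∃ (j : ℤ) (i : ZMod d), 0 ≤ j ∧ x = S.b j i} with hsetB
  set gens : Set A :=
    ({x : A | ∃ (j : ℤ) (i : ZMod d), 1 ≤ j ∧ i ≠ 0 ∧ x = S.b j i}
      ∪ {x : A | ∃ j : ℤ, 1 ≤ j ∧ ¬ ((d : ℤ) ∣ j) ∧ x = S.b j 0}) with hgens
  -- key commutator computation on basis elements
  have key : ∀ (j1 j2 : ℤ) (i1 i2 : ZMod d), 0 ≤ j1 → 0 ≤ j2 →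
      S.b j1 i1 * S.b j2 i2 - S.b j2 i2 * S.b j1 i1 ∈ Submodule.span ℂ gens := by
    intro j1 j2 i1 i2 hj1 hj2
    rw [S.b_mul, S.b_mul, add_comm j2 j1, add_comm i2 i1, ← sub_smul]
    by_cases hc : (ζ ^ ((i1.val : ℤ) * j2) - ζ ^ ((i2.val : ℤ) * j1)) = 0
    · rw [hc, zero_smul]; exact zero_mem _
    · refine Submodule.smul_mem _ _ (Submodule.subset_span ?_)
      by_cases hi : i1 + i2 = 0
      · -- show d does not divide j1 + j2 (and j1+j2 ≥ 1 follows)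
        have hnd : ¬ ((d : ℤ) ∣ (j1 + j2)) := by
          intro hdvd
          apply hc
          rw [sub_eq_zero]
          apply zpow_eq_of_dvd_sub hζ hd
          rw [← ZMod.intCast_zmod_eq_zero_iff_dvd]
          have h1 : ((j1 + j2 : ℤ) : ZMod d) = 0 := by
            rwa [ZMod.intCast_zmod_eq_zero_iff_dvd]
          push_cast at h1 ⊢
          simp only [ZMod.natCast_val, ZMod.cast_id] at *
          linear_combination ((j2 : ℤ) : ZMod d) * hi - i2 * h1
        have hj : 1 ≤ j1 + j2 := by
          rcases lt_or_ge (j1 + j2) 1 with h | h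
          · exfalso; apply hnd; have : j1 + j2 = 0 := by omega
            simp [this]
          · exact h
        exact Or.inr ⟨j1 + j2, hj, hnd, by rw [hi]⟩
      · have hj : 1 ≤ j1 + j2 := by
          rcases lt_or_ge (j1 + j2) 1 with h | h
          · exfalso
            have h1 : j1 = 0 := by omega
            have h2 : j2 = 0 := by omega
            apply hc; rw [h1, h2]; ring_nf
          · exact h
        exact Or.inl ⟨j1 + j2, i1 + i2, hj, hi, rfl⟩
  subst hB
  apply le_antisymm
  · rw [Submodule.span_le]
    rintro x ⟨y, hy, z, hz, rfl⟩
    have step1 : ∀ (j1 : ℤ) (i1 : ZMod d), 0 ≤ j1 → ∀ z', z' ∈ Submodule.span ℂ setB →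
        S.b j1 i1 * z' - z' * S.b j1 i1 ∈ Submodule.span ℂ gens := by
      intro j1 i1 hj1 z' hz'
      induction hz' using Submodule.span_induction with
      | mem w hw =>
        obtain ⟨j2, i2, hj2, rfl⟩ := hw
        exact key j1 j2 i1 i2 hj1 hj2
      | zero => simpa using Submodule.zero_mem _
      | add a b _ _ ha hb =>
        have : S.b j1 i1 * (a + b) - (a + b) * S.b j1 i1 =
            (S.b j1 i1 * a - a * S.b j1 i1) + (S.b j1 i1 * b - b * S.b j1 i1) := by noncomm_ring
        rw [this]; exact add_mem ha hb
      | smul c a _ ha =>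
        have : S.b j1 i1 * (c • a) - (c • a) * S.b j1 i1 =
            c • (S.b j1 i1 * a - a * S.b j1 i1) := by
          rw [mul_smul_comm, smul_mul_assoc, ← smul_sub]
        rw [this]; exact Submodule.smul_mem _ _ ha
    clear key
    refine Submodule.span_induction
      (p := fun y _ => y * z - z * y ∈ Submodule.span ℂ gens) ?_ ?_ ?_ ?_ hy
    · rintro w ⟨j1, i1, hj1, rfl⟩
      exact step1 j1 i1 hj1 z hz
    · simpa using Submodule.zero_mem _
    · intro a b _ _ ha hb
      have : (a + b) * z - z * (a + b) = (a * z - z * a) + (b * z - z * b) := by noncomm_ring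
      rw [this]; exact add_mem ha hb
    · intro c a _ ha
      have : (c • a) * z - z * (c • a) = c • (a * z - z * a) := by
        rw [mul_smul_comm, smul_mul_assoc, ← smul_sub]
      rw [this]; exact Submodule.smul_mem _ _ ha
  · rw [Submodule.span_le]
    have hmemB : ∀ (j : ℤ) (i : ZMod d), 0 ≤ j → S.b j i ∈ Submodule.span ℂ setB :=
      fun j i hj => Submodule.subset_span ⟨j, i, hj, rfl⟩
    rintro x (⟨j, i, hj, hi, rfl⟩ | ⟨j, hj, hdj, rfl⟩)
    · -- use commutator [b (j-1) i, b 1 0]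
      have hcomm : S.b (j-1) i * S.b 1 0 - S.b 1 0 * S.b (j-1) i
          = (ζ ^ (i.val : ℤ) - 1) • S.b j i := by
        rw [S.b_mul, S.b_mul]
        simp only [ZMod.val_zero, Nat.cast_zero, zero_mul, zpow_zero, mul_one, add_zero,
          zero_add, one_smul]
        rw [sub_add_cancel, add_comm 1 (j-1), sub_add_cancel, sub_smul, one_smul]
      have hcne : (ζ ^ (i.val : ℤ) - 1) ≠ 0 := by
        intro h
        have h1 : ζ ^ i.val = 1 := by
          have := sub_eq_zero.mp h
          rwa [zpow_natCast] at this
        have := hζ.dvd_of_pow_eq_one _ h1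
        have hvlt : i.val < d := ZMod.val_lt i
        have hvne : i.val ≠ 0 := by
          intro h0; apply hi; exact (ZMod.val_eq_zero i).mp h0
        exact absurd (Nat.le_of_dvd (Nat.pos_of_ne_zero hvne) this) (by omega)
      have heq : S.b j i = (ζ ^ (i.val : ℤ) - 1)⁻¹ •
          (S.b (j-1) i * S.b 1 0 - S.b 1 0 * S.b (j-1) i) := by
        rw [hcomm, smul_smul, inv_mul_cancel₀ hcne, one_smul]
      rw [heq]
      refine Submodule.smul_mem _ _ (Submodule.subset_span ?_)
      exact ⟨S.b (j-1) i, hmemB _ _ (by omega), S.b 1 0, hmemB _ _ (by omega), rfl⟩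
    · -- use commutator [b 0 1, b j (-1)]
      have hd1 : 1 < d := by
        rcases Nat.lt_or_ge d 2 with h | h
        · exfalso; apply hdj
          have h1 : d = 1 := by omega
          rw [h1]; exact one_dvd j
        · omega
      haveI : Fact (1 < d) := ⟨hd1⟩
      have hcomm : S.b 0 1 * S.b j (-1) - S.b j (-1) * S.b 0 1
          = (ζ ^ j - 1) • S.b j 0 := by
        rw [S.b_mul, S.b_mul]
        simp only [mul_zero, zpow_zero, one_smul, zero_add, add_zero, neg_add_cancel,
          add_neg_cancel, ZMod.val_one, Nat.cast_one, one_mul]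
        rw [sub_smul, one_smul]
      have hcne : (ζ ^ j - 1) ≠ 0 := by
        intro h
        have h1 : ζ ^ j = 1 := sub_eq_zero.mp h
        apply hdj
        have hjt : j = (j.toNat : ℤ) := by omega
        rw [hjt] at h1
        rw [zpow_natCast] at h1
        obtain ⟨k, hk⟩ := hζ.dvd_of_pow_eq_one _ h1
        exact ⟨k, by omega⟩
      have heq : S.b j 0 = (ζ ^ j - 1)⁻¹ •
          (S.b 0 1 * S.b j (-1) - S.b j (-1) * S.b 0 1) := by
        rw [hcomm, smul_smul, inv_mul_cancel₀ hcne, one_smul]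
      rw [heq]
      refine Submodule.smul_mem _ _ (Submodule.subset_span ?_)
      exact ⟨S.b 0 1, hmemB _ _ le_rfl, S.b j (-1), hmemB _ _ (by omega), rfl⟩
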